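/- Let φ = c_1 ∧ … ∧ c_m be a uniform CNF formula over variables x_1,…,x_n with every clause nonempty. Construct the cognitive radio network I with two channels {0,1}: for each variable x_i an SU X_i with SpecMap = {0,1} and budget 1; for each clause c_j an SU C_j with SpecMap = {1} if c_j is positive and {0} if negative, and budget 1; an SU Y with SpecMap = {0,1} and budget 2; potential edges {X_i, C_j} whenever x_i occurs in c_j, and {Y, X_i} for all i. Then φ is satisfiable if and only if I is connectable. -/

import Mathlib

/-- A cognitive radio network: secondary users `U`, channels `C`,
spectrum maps, a potential graph, and antenna budgets. -/
structure CRN (U C : Type) where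
  SpecMap : U → Finset C
  PG : SimpleGraph U
  budget : U → ℕ

/-- A valid spectrum assignment: each SU opens a subset of its spectrum map
of size at most its antenna budget. -/
def CRN.ValidSA {U C : Type} [DecidableEq C] (I : CRN U C) (SA : U → Finset C) : Prop :=
  ∀ u, SA u ⊆ I.SpecMap u ∧ (SA u).card ≤ I.budget u

/-- The realization graph under a spectrum assignment: potential edges whose
endpoints share an opened channel. -/
def CRN.RG {U C : Type} [DecidableEq C] (I : CRN U C) (SA : U → Finset C) : SimpleGraph U where
  Adj u v := I.PG.Adj u v ∧ (SA u ∩ SA v).Nonempty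
  symm := ⟨fun u v h => ⟨I.PG.adj_symm h.1, by rw [Finset.inter_comm]; exact h.2⟩⟩
  loopless := ⟨fun u h => I.PG.loopless.irrefl u h.1⟩

/-- A network is connectable if some valid spectrum assignment makes the
realization graph connected. -/
def CRN.Connectable {U C : Type} [DecidableEq C] (I : CRN U C) : Prop :=
  ∃ SA, I.ValidSA SA ∧ (I.RG SA).Connected

/-- The SU set of the reduction: variable SUs X_i, clause SUs C_j, and the SU Y. -/
abbrev V5 (n m : ℕ) := Fin n ⊕ Fin m ⊕ Unit

/-- Spectrum maps: X_i gets {0,1}, C_j gets {1} if positive and {0} if negative,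
Y gets {0,1}. A clause c_j is given by its variable set P j and polarity pos j. -/
def specMap5 (n m : ℕ) (pos : Fin m → Bool) : V5 n m → Finset (Fin 2)
  | Sum.inl _ => Finset.univ
  | Sum.inr (Sum.inl j) => {if pos j then (1 : Fin 2) else 0}
  | Sum.inr (Sum.inr _) => Finset.univ

/-- Budgets: 1 for the X_i and C_j, 2 for Y. -/
def budget5 (n m : ℕ) : V5 n m → ℕ
  | Sum.inl _ => 1
  | Sum.inr (Sum.inl _) => 1
  | Sum.inr (Sum.inr _) => 2

/-- Potential edges (to be symmetrized): X_i -- C_j whenever x_i occurs in c_j,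
and Y -- X_i for all i. -/
def rel5 (n m : ℕ) (P : Fin m → Finset (Fin n)) : V5 n m → V5 n m → Prop
  | Sum.inl i, Sum.inr (Sum.inl j) => i ∈ P j
  | Sum.inr (Sum.inr _), Sum.inl _ => True
  | _, _ => False

/-- The cognitive radio network of the two-channel reduction. -/
def net5 (n m : ℕ) (P : Fin m → Finset (Fin n)) (pos : Fin m → Bool) :
    CRN (V5 n m) (Fin 2) where
  SpecMap := specMap5 n m pos
  PG := SimpleGraph.fromRel (rel5 n m P)
  budget := budget5 n m

/-- The uniform CNF formula with nonempty clauses c_j = (P j, pos j) is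
satisfiable iff the two-channel network of the reduction is connectable. -/
theorem stmt_5 (n m : ℕ)
    (P : Fin m → Finset (Fin n)) (pos : Fin m → Bool)
    (hne : ∀ j, (P j).Nonempty) :
    (∃ A : Fin n → Bool, ∀ j, ∃ i ∈ P j, A i = pos j) ↔ (net5 n m P pos).Connectable := by
  constructor
  · rintro ⟨A, hA⟩
    classical
    refine ⟨fun v => match v with
      | Sum.inl i => {if A i then (1 : Fin 2) else 0}
      | Sum.inr (Sum.inl j) => {if pos j then (1 : Fin 2) else 0}
      | Sum.inr (Sum.inr _) => Finset.univ, ?_, ?_⟩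
    · rintro (i | j | u)
      · exact ⟨Finset.subset_univ _, by simp [net5, budget5]⟩
      · exact ⟨by simp [net5, specMap5], by simp [net5, budget5]⟩
      · exact ⟨Finset.subset_univ _, by simp [net5, budget5]⟩
    · set SA : V5 n m → Finset (Fin 2) := fun v => match v with
        | Sum.inl i => {if A i then (1 : Fin 2) else 0}
        | Sum.inr (Sum.inl j) => {if pos j then (1 : Fin 2) else 0}
        | Sum.inr (Sum.inr _) => Finset.univ with hSA
      set G := (net5 n m P pos).RG SA with hG
      have hYX : ∀ i : Fin n, G.Adj (Sum.inr (Sum.inr ())) (Sum.inl i) := by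
        intro i
        refine ⟨⟨by simp, Or.inl trivial⟩, ?_⟩
        refine ⟨if A i then (1 : Fin 2) else 0, ?_⟩
        simp [hSA]
      have hXC : ∀ j : Fin m, ∃ i : Fin n, G.Adj (Sum.inl i) (Sum.inr (Sum.inl j)) := by
        intro j
        obtain ⟨i, hi, hAi⟩ := hA j
        refine ⟨i, ⟨by simp, Or.inl hi⟩, ?_⟩
        refine ⟨if pos j then (1 : Fin 2) else 0, ?_⟩
        simp [hSA, hAi]
      have hreach : ∀ v : V5 n m, G.Reachable (Sum.inr (Sum.inr ())) v := by
        rintro (i | j | u)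
        · exact (hYX i).reachable
        · obtain ⟨i, hij⟩ := hXC j
          exact ((hYX i).reachable).trans hij.reachable
        · rfl
      have : Nonempty (V5 n m) := ⟨Sum.inr (Sum.inr ())⟩
      exact ⟨fun u v => (hreach u).symm.trans (hreach v)⟩
  · rintro ⟨SA, hval, hconn⟩
    classical
    refine ⟨fun i => decide ((1 : Fin 2) ∈ SA (Sum.inl i)), fun j => ?_⟩
    -- C_j has a neighbor in the realization graph
    have hreach := hconn.preconnected (Sum.inr (Sum.inl j)) (Sum.inr (Sum.inr ()))
    obtain ⟨w⟩ := hreach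
    cases w with
    | cons hadj _ =>
      rename_i x _
      obtain ⟨⟨hne', hrel⟩, c, hc⟩ := hadj
      have hrel' : ∃ i : Fin n, x = Sum.inl i ∧ i ∈ P j := by
        rcases hrel with h | h
        · exact absurd h (by cases x <;> simp [rel5] <;> rename_i y <;> cases y <;> simp [rel5])
        · rcases x with i | y
          · exact ⟨i, rfl, h⟩
          · rcases y with j' | u <;> exact absurd h (by simp [rel5])
      obtain ⟨i, rfl, hiP⟩ := hrel'
      refine ⟨i, hiP, ?_⟩
      simp only [Finset.mem_inter] at hc
      have hsub := (hval (Sum.inr (Sum.inl j))).1 hc.1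
      simp only [net5, specMap5, Finset.mem_singleton] at hsub
      have hcard := (hval (Sum.inl i)).2
      simp only [net5, budget5] at hcard
      cases hp : pos j with
      | true =>
        rw [hp] at hsub; simp at hsub
        subst hsub
        simp [hc.2]
      | false =>
        rw [hp] at hsub; simp at hsub
        subst hsub
        have h1 : (1 : Fin 2) ∉ SA (Sum.inl i) := by
          intro h1
          have : ({0, 1} : Finset (Fin 2)) ⊆ SA (Sum.inl i) := by
            intro z hz
            simp at hz
            rcases hz with rfl | rfl
            · exact hc.2
            · exact h1
          have := Finset.card_le_card this
          simp at this
          omega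
        simp [h1]
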